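/- For every r ∈ (0,1), with q = √(1−r²), N = [[0,r,0],[−r,0,−q],[0,q,0]], and R_R(π) = exp(π·Ω_R), the following three matrix identities hold: (i) Ω_L·R_R(π) + R_R(π)·Ω_L = 2(2r²−1)·N; (ii) Ω_G·R_R(π) + R_R(π)·Ω_G = 2r·N; (iii) R_R(π)·Ω_R = N. Consequently, for real numbers a₁, a₂, the equation Ω_L·R_R(π) + R_R(π)·Ω_L = a₁·(Ω_G·R_R(π) + R_R(π)·Ω_G) + a₂·R_R(π)·Ω_R holds if and only if 2r·a₁ + a₂ = 2(2r²−1). -/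

import Mathlib

open Real

noncomputable def OmegaL (r : ℝ) : Matrix (Fin 3) (Fin 3) ℝ :=
  !![0, -r, 0; r, 0, -Real.sqrt (1 - r ^ 2); 0, Real.sqrt (1 - r ^ 2), 0]

noncomputable def OmegaR (r : ℝ) : Matrix (Fin 3) (Fin 3) ℝ :=
  !![0, -r, 0; r, 0, Real.sqrt (1 - r ^ 2); 0, -Real.sqrt (1 - r ^ 2), 0]

noncomputable def OmegaG : Matrix (Fin 3) (Fin 3) ℝ :=
  !![0, -1, 0; 1, 0, 0; 0, 0, 0]

/-- Rotation matrix of a left turn of radius `r` and arc angle `φ`. -/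
noncomputable def RL (r φ : ℝ) : Matrix (Fin 3) (Fin 3) ℝ := NormedSpace.exp (φ • OmegaL r)

/-- Rotation matrix of a right turn of radius `r` and arc angle `φ`. -/
noncomputable def RR (r φ : ℝ) : Matrix (Fin 3) (Fin 3) ℝ := NormedSpace.exp (φ • OmegaR r)

/-- Rotation matrix of a great-circle arc of angle `φ`. -/
noncomputable def RG (φ : ℝ) : Matrix (Fin 3) (Fin 3) ℝ := NormedSpace.exp (φ • OmegaG)

lemma aux_pow_odd3 {A : Matrix (Fin 3) (Fin 3) ℝ} (h : A ^ 3 = -A) (k : ℕ) :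
    A ^ (2 * k + 1) = (-1 : ℝ) ^ k • A := by
  induction k with
  | zero => simp
  | succ n ih =>
    have e : 2 * (n + 1) + 1 = (2 * n + 1) + 2 := by ring
    rw [e, pow_add, ih, Matrix.smul_mul]
    have e2 : A * A ^ 2 = A ^ 3 := (pow_succ' A 2).symm
    rw [e2, h, smul_neg, pow_succ]
    rw [← neg_smul]
    ring_nf

lemma aux_pow_even3 {A : Matrix (Fin 3) (Fin 3) ℝ} (h : A ^ 3 = -A) (k : ℕ) :
    A ^ (2 * k + 2) = (-1 : ℝ) ^ k • (A * A) := by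
  have e : 2 * k + 2 = (2 * k + 1) + 1 := by ring
  rw [e, pow_succ, aux_pow_odd3 h, Matrix.smul_mul]

lemma aux_exp_smul_cube {A : Matrix (Fin 3) (Fin 3) ℝ} (h : A ^ 3 = -A) (t : ℝ) :
    NormedSpace.exp (t • A) =
      1 + Real.sin t • A + (1 - Real.cos t) • (A * A) := by
  rw [NormedSpace.exp_eq_tsum ℝ]
  refine HasSum.tsum_eq ?_
  have key : ∀ n : ℕ, (n.factorial : ℝ)⁻¹ • (t • A) ^ n = (t ^ n / n.factorial) • A ^ n := by
    intro n
    rw [smul_pow, smul_smul, div_eq_inv_mul, mul_comm]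
  simp_rw [key]
  have target : (1 : Matrix (Fin 3) (Fin 3) ℝ) + Real.sin t • A + (1 - Real.cos t) • (A * A)
      = ((1 : Matrix (Fin 3) (Fin 3) ℝ) + (1 - Real.cos t) • (A * A)) + Real.sin t • A := by
    abel
  rw [target]
  refine HasSum.even_add_odd ?_ ?_
  · -- even part
    have h0 : HasSum (fun n : ℕ => (-1 : ℝ) ^ n * t ^ (2 * n) / (Nat.factorial (2 * n) : ℝ)) (Real.cos t) :=
      Real.hasSum_cos t
    have h1 : HasSum (fun n : ℕ => (-1 : ℝ) ^ (n + 1) * t ^ (2 * (n + 1)) / (Nat.factorial (2 * (n + 1)) : ℝ))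
        (Real.cos t - 1) := by
      have := (hasSum_nat_add_iff'
        (f := fun n : ℕ => (-1 : ℝ) ^ n * t ^ (2 * n) / (Nat.factorial (2 * n) : ℝ)) 1).mpr h0
      simpa using this
    have h2 : HasSum (fun n : ℕ => ((-1 : ℝ) ^ n * t ^ (2 * n + 2) / (Nat.factorial (2 * n + 2) : ℝ)) • (A * A))
        ((1 - Real.cos t) • (A * A)) := by
      have := (h1.neg).smul_const (A * A)
      convert this using 2 with n
      · rw [pow_succ]
        have e1 : 2 * (n + 1) = 2 * n + 2 := by ring
        rw [e1]
        ring_nf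
      · rw [neg_sub]
    refine (hasSum_nat_add_iff' 1).mp ?_
    have hsum0 : ∑ i ∈ Finset.range 1,
        (t ^ (2 * i) / (Nat.factorial (2 * i) : ℝ)) • A ^ (2 * i) = 1 := by simp
    rw [hsum0, add_sub_cancel_left]
    convert h2 using 2 with n
    · rfl
    have e1 : 2 * (n + 1) = 2 * n + 2 := by ring
    rw [e1, aux_pow_even3 h, smul_smul]
    congr 1
    ring
  · -- odd part
    have hs : HasSum (fun n : ℕ => (-1 : ℝ) ^ n * t ^ (2 * n + 1) / (Nat.factorial (2 * n + 1) : ℝ))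
        (Real.sin t) := Real.hasSum_sin t
    have := hs.smul_const A
    convert this using 2 with n
    · rfl
    rw [aux_pow_odd3 h, smul_smul]
    congr 1
    ring

set_option maxHeartbeats 1600000 in
theorem stmt_19 (r : ℝ) (hr : r ∈ Set.Ioo (0 : ℝ) 1) :
    (OmegaL r * RR r Real.pi + RR r Real.pi * OmegaL r =
      (2 * (2 * r ^ 2 - 1)) •
        !![0, r, 0; -r, 0, -Real.sqrt (1 - r ^ 2); 0, Real.sqrt (1 - r ^ 2), 0]) ∧
    (OmegaG * RR r Real.pi + RR r Real.pi * OmegaG =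
      (2 * r) •
        !![0, r, 0; -r, 0, -Real.sqrt (1 - r ^ 2); 0, Real.sqrt (1 - r ^ 2), 0]) ∧
    (RR r Real.pi * OmegaR r =
      !![0, r, 0; -r, 0, -Real.sqrt (1 - r ^ 2); 0, Real.sqrt (1 - r ^ 2), 0]) ∧
    ∀ a₁ a₂ : ℝ,
      (OmegaL r * RR r Real.pi + RR r Real.pi * OmegaL r =
        a₁ • (OmegaG * RR r Real.pi + RR r Real.pi * OmegaG) +
          a₂ • (RR r Real.pi * OmegaR r)) ↔
      2 * r * a₁ + a₂ = 2 * (2 * r ^ 2 - 1) := by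
  have hq : Real.sqrt (1 - r ^ 2) ^ 2 = 1 - r ^ 2 :=
    Real.sq_sqrt (by nlinarith [hr.2, hr.1])
  have hcube : (OmegaR r) ^ 3 = -(OmegaR r) := by
    rw [pow_succ, pow_two]
    ext i j
    fin_cases i <;> fin_cases j <;>
      simp [OmegaR, Matrix.mul_apply, Fin.sum_univ_three] <;>
      first
        | linear_combination r * hq
        | linear_combination (-r) * hq
        | linear_combination Real.sqrt (1 - r ^ 2) * hq
        | linear_combination (-Real.sqrt (1 - r ^ 2)) * hq
  have hE : RR r Real.pi =
      !![1 - 2 * r ^ 2, 0, -2 * r * Real.sqrt (1 - r ^ 2);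
         0, -1, 0;
         -2 * r * Real.sqrt (1 - r ^ 2), 0, 2 * r ^ 2 - 1] := by
    rw [RR, aux_exp_smul_cube hcube, Real.sin_pi, Real.cos_pi]
    ext i j
    fin_cases i <;> fin_cases j <;>
      simp [OmegaR, Matrix.mul_apply, Fin.sum_univ_three, Matrix.one_apply] <;>
      first
        | ring1
        | linear_combination (2 : ℝ) * hq
        | linear_combination (-2 : ℝ) * hq
  set q := Real.sqrt (1 - r ^ 2) with hqdef
  have key1 : OmegaL r * RR r Real.pi + RR r Real.pi * OmegaL r =
      (2 * (2 * r ^ 2 - 1)) • !![0, r, 0; -r, 0, -q; 0, q, 0] := by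
    rw [hE]
    ext i j
    fin_cases i <;> fin_cases j <;>
      simp [OmegaL, Matrix.mul_apply, Fin.sum_univ_three] <;>
      first
        | ring1
        | linear_combination (2 * r) * hq
        | linear_combination (-2 * r) * hq
        | linear_combination (2 * q) * hq
        | linear_combination (-2 * q) * hq
        | linear_combination (4 * r) * hq
        | linear_combination (-4 * r) * hq
  have key2 : OmegaG * RR r Real.pi + RR r Real.pi * OmegaG =
      (2 * r) • !![0, r, 0; -r, 0, -q; 0, q, 0] := by
    rw [hE]
    ext i j
    fin_cases i <;> fin_cases j <;>
      simp [OmegaG, Matrix.mul_apply, Fin.sum_univ_three, Matrix.vecHead, Matrix.vecTail] <;>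
      ring
  have key3 : RR r Real.pi * OmegaR r = !![0, r, 0; -r, 0, -q; 0, q, 0] := by
    rw [hE]
    ext i j
    fin_cases i <;> fin_cases j <;>
      simp [OmegaR, Matrix.mul_apply, Fin.sum_univ_three] <;>
      first
        | ring1
        | linear_combination (2 * r) * hq
        | linear_combination (-2 * r) * hq
        | linear_combination q * hq
        | linear_combination (-q) * hq
  refine ⟨key1, key2, key3, fun a₁ a₂ => ?_⟩
  constructor
  · intro heq
    rw [key1, key2, key3] at heq
    have h01 := congrFun (congrFun heq 0) 1
    simp [Matrix.smul_apply, Matrix.add_apply] at h01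
    have hr0 : r ≠ 0 := ne_of_gt hr.1
    have h2 : r * (2 * r * a₁ + a₂) = r * (2 * (2 * r ^ 2 - 1)) := by
      first
        | linear_combination h01
        | linear_combination -h01
    exact mul_left_cancel₀ hr0 h2
  · intro heq
    rw [key1, key2, key3, smul_smul, ← add_smul]
    congr 1
    rw [← heq]
    ring
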